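/- (Local optimism under coupled perturbations, core of Lemma F.1) Let θ*, θ̂ ∈ ℝ^d, Φ*, Φ̂ ∈ ℝ^{m×d}, α ∈ ℝ^m, let V be a positive-definite d×d matrix, ω ≥ 0, and let a* ∈ ℝ^d satisfy Φ*a* ≤ α. Assume consistency: ‖θ̂ − θ*‖_V ≤ ω and ‖Φ̂ⁱ − Φ*ⁱ‖_V ≤ ω for every row i. Let ν be a probability law on ℝ^d such that for every u ∈ ℝ^d, ν({ζ : ζᵀu ≥ ‖u‖}) ≥ p, for some p ∈ (0,1]. Define, for ζ ∈ ℝ^d, θ̃(ζ)ᵀ := θ̂ᵀ + ω·ζᵀV^{-1/2} and Φ̃(ζ) := Φ̂ − 1_m·(ω·ζᵀV^{-1/2}). Then ν({ ζ : θ̃(ζ)ᵀa* ≥ θ*ᵀa* and Φ̃(ζ)a* ≤ α }) ≥ p. -/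

import Mathlib

open MeasureTheory
open scoped Matrix

/-- Euclidean norm of a vector in `Fin n → ℝ`. -/
noncomputable def vnorm {n : ℕ} (v : Fin n → ℝ) : ℝ := Real.sqrt (∑ i, v i ^ 2)

/-- Weighted norm `‖v‖_M = ‖M^{1/2} v‖ = √(vᵀ M v)` for a positive-semidefinite matrix `M`. -/
noncomputable def wnorm {d : ℕ} (M : Matrix (Fin d) (Fin d) ℝ) (v : Fin d → ℝ) : ℝ :=
  Real.sqrt (v ⬝ᵥ M.mulVec v)

lemma dot_le_vnorm {n : ℕ} (u v : Fin n → ℝ) : u ⬝ᵥ v ≤ vnorm u * vnorm v := by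
  have h := Finset.sum_mul_sq_le_sq_mul_sq Finset.univ u v
  have h1 : u ⬝ᵥ v ≤ Real.sqrt ((∑ i, u i ^ 2) * (∑ i, v i ^ 2)) := by
    calc u ⬝ᵥ v ≤ |u ⬝ᵥ v| := le_abs_self _
    _ = Real.sqrt ((u ⬝ᵥ v) ^ 2) := (Real.sqrt_sq_eq_abs _).symm
    _ ≤ _ := Real.sqrt_le_sqrt (by simpa [dotProduct] using h)
  rw [Real.sqrt_mul (by positivity)] at h1
  simpa [vnorm] using h1

lemma psd_dot_le {n : ℕ} {M : Matrix (Fin n) (Fin n) ℝ} (hM : M.PosSemidef)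
    (x y : Fin n → ℝ) :
    x ⬝ᵥ M *ᵥ y ≤ Real.sqrt (x ⬝ᵥ M *ᵥ x) * Real.sqrt (y ⬝ᵥ M *ᵥ y) := by
  obtain ⟨B, hB, hB2⟩ : ∃ B : Matrix (Fin n) (Fin n) ℝ, B.IsHermitian ∧ B * B = M :=
    open scoped MatrixOrder in
    ⟨CFC.sqrt M, (Matrix.nonneg_iff_posSemidef.mp (CFC.sqrt_nonneg M)).1,
      by open scoped MatrixOrder in (rw [← pow_two]; exact CFC.sq_sqrt M hM.nonneg)⟩
  have key : ∀ a b : Fin n → ℝ, a ⬝ᵥ M *ᵥ b = (B *ᵥ a) ⬝ᵥ (B *ᵥ b) := by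
    intro a b
    rw [← hB2, ← Matrix.mulVec_mulVec, Matrix.dotProduct_mulVec]
    congr 1
    rw [← Matrix.mulVec_transpose, show Bᵀ = B from (by simpa using hB : B.IsSymm)]
  rw [key, key, key]
  have := dot_le_vnorm (B *ᵥ x) (B *ᵥ y)
  simpa [vnorm, dotProduct, pow_two] using this

lemma wnorm_key {d : ℕ} (V : Matrix (Fin d) (Fin d) ℝ) (hV : V.PosDef)
    (S : Matrix (Fin d) (Fin d) ℝ) (hSpsd : S.PosSemidef) (hSsq : S * S = V⁻¹)
    (x a : Fin d → ℝ) : x ⬝ᵥ a ≤ wnorm V x * vnorm (S *ᵥ a) := by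
  have hdet : IsUnit V.det := isUnit_iff_ne_zero.2 (ne_of_gt hV.det_pos)
  have hVa : V *ᵥ (V⁻¹ *ᵥ a) = a := by
    rw [Matrix.mulVec_mulVec, Matrix.mul_nonsing_inv _ hdet, Matrix.one_mulVec]
  have h1 : x ⬝ᵥ a = x ⬝ᵥ V *ᵥ (V⁻¹ *ᵥ a) := by rw [hVa]
  have h2 := psd_dot_le hV.posSemidef x (V⁻¹ *ᵥ a)
  have h3 : (V⁻¹ *ᵥ a) ⬝ᵥ V *ᵥ (V⁻¹ *ᵥ a) = (S *ᵥ a) ⬝ᵥ (S *ᵥ a) := by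
    rw [hVa]
    have hSinv : (V⁻¹ *ᵥ a) = S *ᵥ (S *ᵥ a) := by
      rw [Matrix.mulVec_mulVec, hSsq]
    rw [hSinv, Matrix.dotProduct_mulVec]
    congr 1
    rw [← Matrix.mulVec_transpose, show Sᵀ = S from (by simpa using hSpsd.1 : S.IsSymm)]
  have h4 : Real.sqrt ((S *ᵥ a) ⬝ᵥ (S *ᵥ a)) = vnorm (S *ᵥ a) := by
    simp [vnorm, dotProduct, pow_two]
  rw [h1]
  calc x ⬝ᵥ V *ᵥ (V⁻¹ *ᵥ a) ≤ _ := h2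
  _ = wnorm V x * vnorm (S *ᵥ a) := by rw [h3, h4]; rfl

lemma wnorm_sub_comm {d : ℕ} (M : Matrix (Fin d) (Fin d) ℝ) (u v : Fin d → ℝ) :
    wnorm M (fun j => u j - v j) = wnorm M (fun j => v j - u j) := by
  have h : (fun j => v j - u j) = -(fun j => u j - v j) := by funext j; simp
  rw [h]
  simp [wnorm, Matrix.mulVec_neg, dotProduct_neg, neg_dotProduct]

lemma dot_sub {d : ℕ} (u v a : Fin d → ℝ) :
    (fun j => u j - v j) ⬝ᵥ a = u ⬝ᵥ a - v ⬝ᵥ a := by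
  simp [dotProduct, sub_mul, Finset.sum_sub_distrib]

/-- **Local optimism under coupled perturbations (core of Lemma F.1).** Let `a*` be feasible
(`Φ*a* ≤ α`), assume consistency of the estimates `(θ̂, Φ̂)` at radius `ω` in the `V`-norm,
and let `ν` be a law on `ℝ^d` with anticoncentration constant `p`. Writing `S = V^{-1/2}`
(a positive-semidefinite square root of `V⁻¹`), and defining the coupled perturbations
`θ̃(ζ) := θ̂ + ω·Sζ` and `Φ̃(ζ) := Φ̂ − 1_m(ωζᵀS)` (each row of `Φ̂` shifted by `−ωζᵀV^{-1/2}`),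
the event `{ζ : θ̃(ζ)ᵀa* ≥ θ*ᵀa* and Φ̃(ζ)a* ≤ α}` has `ν`-probability at least `p`. -/
theorem local_optimism_coupled (d m : ℕ)
    (θs θh : Fin d → ℝ) (Φs Φh : Fin m → Fin d → ℝ) (α : Fin m → ℝ)
    (V : Matrix (Fin d) (Fin d) ℝ) (hV : V.PosDef)
    (S : Matrix (Fin d) (Fin d) ℝ) (hSpsd : S.PosSemidef) (hSsq : S * S = V⁻¹)
    (ω : ℝ) (hω : 0 ≤ ω)
    (astar : Fin d → ℝ) (hfeas : ∀ i, Φs i ⬝ᵥ astar ≤ α i)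
    (hθcon : wnorm V (fun j => θh j - θs j) ≤ ω)
    (hΦcon : ∀ i, wnorm V (fun j => Φh i j - Φs i j) ≤ ω)
    (p : ℝ) (hp : p ∈ Set.Ioc (0 : ℝ) 1)
    (ν : Measure (Fin d → ℝ)) [IsProbabilityMeasure ν]
    (hanti : ∀ u : Fin d → ℝ, ENNReal.ofReal p ≤ ν {ζ | vnorm u ≤ ζ ⬝ᵥ u}) :
    ENNReal.ofReal p
      ≤ ν {ζ | θs ⬝ᵥ astar ≤ (fun j => θh j + ω * (ζ ᵥ* S) j) ⬝ᵥ astar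
          ∧ ∀ i, (fun j => Φh i j - ω * (ζ ᵥ* S) j) ⬝ᵥ astar ≤ α i} := by

  set u := S *ᵥ astar with hu
  refine (hanti u).trans (measure_mono ?_)
  intro ζ hζ
  simp only [Set.mem_setOf_eq] at hζ ⊢
  have hdot : (ζ ᵥ* S) ⬝ᵥ astar = ζ ⬝ᵥ u := (Matrix.dotProduct_mulVec ζ S astar).symm
  have hvn : 0 ≤ vnorm u := Real.sqrt_nonneg _
  have hωc : ω * vnorm u ≤ ω * (ζ ⬝ᵥ u) := mul_le_mul_of_nonneg_left hζ hω
  have hexp1 : (fun j => θh j + ω * (ζ ᵥ* S) j) ⬝ᵥ astar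
      = θh ⬝ᵥ astar + ω * ((ζ ᵥ* S) ⬝ᵥ astar) := by
    simp only [dotProduct, Finset.mul_sum, ← Finset.sum_add_distrib]
    exact Finset.sum_congr rfl fun j _ => by ring
  have hexp2 : ∀ i, (fun j => Φh i j - ω * (ζ ᵥ* S) j) ⬝ᵥ astar
      = Φh i ⬝ᵥ astar - ω * ((ζ ᵥ* S) ⬝ᵥ astar) := by
    intro i
    simp only [dotProduct, Finset.mul_sum, ← Finset.sum_sub_distrib]
    exact Finset.sum_congr rfl fun j _ => by ring
  constructor
  · have key := wnorm_key V hV S hSpsd hSsq (fun j => θs j - θh j) astar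
    rw [wnorm_sub_comm] at key
    have h1 : (fun j => θs j - θh j) ⬝ᵥ astar ≤ ω * vnorm u := by
      calc (fun j => θs j - θh j) ⬝ᵥ astar ≤ _ := key
      _ ≤ ω * vnorm u := mul_le_mul_of_nonneg_right hθcon hvn
    rw [dot_sub] at h1
    rw [hexp1, hdot]
    linarith
  · intro i
    have key := wnorm_key V hV S hSpsd hSsq (fun j => Φh i j - Φs i j) astar
    have h1 : (fun j => Φh i j - Φs i j) ⬝ᵥ astar ≤ ω * vnorm u := by
      calc (fun j => Φh i j - Φs i j) ⬝ᵥ astar ≤ _ := key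
      _ ≤ ω * vnorm u := mul_le_mul_of_nonneg_right (hΦcon i) hvn
    rw [dot_sub] at h1
    rw [hexp2, hdot]
    have := hfeas i
    linarith
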